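/- In the interpolation setting, Bregman SGD converges linearly: if ∇f_ξ(x*) = 0 for all ξ (so σ² = 0), each f_ξ is convex and L-relatively smooth w.r.t. h, f is μ-relatively strongly convex with μ > 0, and η ≤ 1/(2L), then E[D_h(x*, x_t)] ≤ (1 - ημ)^t D_h(x*, x₀). -/

import Mathlib

open MeasureTheory Set Finset ProbabilityTheory
noncomputable section

abbrev E (d : ℕ) := EuclideanSpace ℝ (Fin d)

/-- Bregman divergence `D_f(x,y) = f x - f y - ⟪∇f(y), x - y⟫`. -/
def breg {d : ℕ} (f : E d → ℝ) (f' : E d → E d) (x y : E d) : ℝ :=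
  f x - f y - inner ℝ (f' y) (x - y)


lemma hasDerivAt_comp_line {d : ℕ} {φ : E d → ℝ} {g : E d} {x : E d} (v : E d)
    (hg : HasGradientAt φ g x) :
    HasDerivAt (fun s : ℝ => φ (x + s • v)) (inner ℝ g v : ℝ) 0 := by
  have hline : HasDerivAt (fun s : ℝ => x + s • v) v 0 := by
    simpa using ((hasDerivAt_id (0 : ℝ)).smul_const v).const_add x
  have h1 : HasFDerivAt φ (InnerProductSpace.toDual ℝ (E d) g) ((fun s : ℝ => x + s • v) 0) := by
    simpa using hg.hasFDerivAt
  simpa [InnerProductSpace.toDual_apply_apply, Function.comp_def] using (h1.comp_hasDerivAt 0 hline : _)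

lemma grad_ineq {d : ℕ} {s : Set (E d)} {φ : E d → ℝ} (hφ : ConvexOn ℝ s φ)
    {x y : E d} (hx : x ∈ s) (hy : y ∈ s) {g : E d} (hg : HasGradientAt φ g x) :
    φ x + (inner ℝ g (y - x) : ℝ) ≤ φ y := by
  set v := y - x with hv
  have hψ : HasDerivAt (fun t : ℝ => φ (x + t • v)) (inner ℝ g v : ℝ) 0 :=
    hasDerivAt_comp_line v hg
  have hslope : ∀ t : ℝ, t ∈ Set.Ioc (0 : ℝ) 1 →
      (φ (x + t • v) - φ x) / t ≤ φ y - φ x := by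
    intro t ht
    have heq : (1 - t) • x + t • y = x + t • v := by rw [hv]; module
    have hval := hφ.2 hx hy (show (0:ℝ) ≤ 1 - t by linarith [ht.2]) ht.1.le (by ring)
    rw [heq] at hval
    simp only [smul_eq_mul] at hval
    rw [div_le_iff₀ ht.1]
    nlinarith
  have htend : Filter.Tendsto (fun t : ℝ => (φ (x + t • v) - φ x) / t)
      (nhdsWithin 0 (Set.Ioi 0)) (nhds (inner ℝ g v : ℝ)) := by
    have h := (hψ.hasDerivWithinAt (s := Set.Ioi (0 : ℝ)))
    rw [hasDerivWithinAt_iff_tendsto_slope] at h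
    have hss : Set.Ioi (0 : ℝ) \ {0} = Set.Ioi (0 : ℝ) := by
      apply Set.diff_singleton_eq_self; simp
    rw [hss] at h
    refine h.congr' ?_
    filter_upwards [self_mem_nhdsWithin] with t ht
    simp only [slope, vsub_eq_sub, sub_zero, zero_smul, add_zero, smul_eq_mul]
    rw [div_eq_inv_mul]
  have hev : ∀ᶠ t in nhdsWithin (0 : ℝ) (Set.Ioi 0),
      (φ (x + t • v) - φ x) / t ≤ φ y - φ x := by
    filter_upwards [Ioc_mem_nhdsGT_of_mem (by norm_num : (0 : ℝ) ∈ Set.Ico (0 : ℝ) 1)]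
      with t ht using hslope t ht
  have := le_of_tendsto htend hev
  linarith

set_option maxHeartbeats 1000000 in
/-- **Interpolation: linear convergence of Bregman SGD.** If
`∇f_ξ(x*) = 0` for all `ξ` (so `σ² = 0`), each `f_ξ` is convex and `L`-relatively
smooth w.r.t. `h`, `f` is `μ`-relatively strongly convex with `μ > 0`, and
`0 < η ≤ 1/(2L)`, then Bregman SGD started at `x₀` with i.i.d. samples
`ξ_t ∼ ν` (each `ξ_t` independent of the current iterate) satisfies
`E[D_h(x*, x_t)] ≤ (1 - ημ)^t D_h(x*, x₀)`. -/
theorem bsgd_interpolation_linear {d : ℕ}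
    (C : Set (E d)) (hC : IsClosed C) (hCconv : Convex ℝ C)
    (h f : E d → ℝ) (h' f' : E d → E d)
    (hh2 : ContDiffOn ℝ 2 h (interior C))
    (hhsc : StrictConvexOn ℝ (interior C) h)
    (hh' : ∀ x ∈ interior C, HasGradientAt h (h' x) x)
    (hblanket : ∀ y : E d, ∃! z, z ∈ interior C ∧
      IsMinOn (fun u => h u - (inner ℝ u y : ℝ)) C z)
    {Ξ : Type*} [MeasurableSpace Ξ] (ν : Measure Ξ) [IsProbabilityMeasure ν]
    (fs : Ξ → E d → ℝ) (G : Ξ → E d → E d)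
    (L μ η : ℝ) (hL : 0 < L) (hμ : 0 < μ)
    (hfsconv : ∀ ξ, ConvexOn ℝ C (fs ξ))
    (hfsgrad : ∀ ξ, ∀ x ∈ interior C, HasGradientAt (fs ξ) (G ξ x) x)
    (hrelsmooth : ∀ ξ, ∀ x ∈ interior C, ∀ y ∈ interior C,
      breg (fs ξ) (G ξ) x y ≤ L * breg h h' x y)
    (hfdef : ∀ x : E d, f x = ∫ ξ, fs ξ x ∂ν)
    (hf'def : ∀ x : E d, f' x = ∫ ξ, G ξ x ∂ν)
    (hrelsc : ∀ x ∈ interior C, ∀ y ∈ interior C,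
      μ * breg h h' x y ≤ breg f f' x y)
    (xstar x0 : E d) (hxstar : xstar ∈ interior C) (hx0 : x0 ∈ interior C)
    (hcrit : f' xstar = 0)
    (hinterp : ∀ ξ, G ξ xstar = 0)
    (hη0 : 0 < η) (hη : η ≤ 1 / (2 * L))
    {Ω : Type*} [MeasurableSpace Ω] (P : Measure Ω) [IsProbabilityMeasure P]
    (X : ℕ → Ω → E d) (ξs : ℕ → Ω → Ξ)
    (hX0 : ∀ ω, X 0 ω = x0)
    (hXmem : ∀ t ω, X t ω ∈ interior C)
    (hupdate : ∀ t ω, h' (X (t + 1) ω) = h' (X t ω) - η • G (ξs t ω) (X t ω))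
    (hindep : ∀ t, IndepFun (X t) (ξs t) P)
    (hlaw : ∀ t, Measure.map (ξs t) P = ν)
    (hXmeas : ∀ t, AEMeasurable (X t) P) (hξmeas : ∀ t, AEMeasurable (ξs t) P)
    (hint : ∀ t, Integrable (fun ω => breg h h' xstar (X t ω)) P) :
    ∀ t, ∫ ω, breg h h' xstar (X t ω) ∂P
      ≤ (1 - η * μ) ^ t * breg h h' xstar x0 := by
  classical
  have hconvS : Convex ℝ (interior C) := hCconv.interior
  have hhconv : ConvexOn ℝ (interior C) h := hhsc.convexOn
  -- nonnegativity of the h-Bregman divergence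
  have hDh0 : ∀ x ∈ interior C, ∀ y ∈ interior C, 0 ≤ breg h h' x y := by
    intro x hx y hy
    have := grad_ineq hhconv hy hx (hh' y hy)
    simp only [breg]; linarith
  -- strict positivity
  have hDhpos : ∀ x ∈ interior C, ∀ y ∈ interior C, x ≠ y → 0 < breg h h' x y := by
    intro x hx y hy hxy
    have hmem : (2⁻¹ : ℝ) • x + (2⁻¹ : ℝ) • y ∈ interior C :=
      hconvS hx hy (by norm_num) (by norm_num) (by norm_num)
    have hstrict := hhsc.2 hx hy hxy (by norm_num : (0:ℝ) < 2⁻¹) (by norm_num : (0:ℝ) < 2⁻¹)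
      (by norm_num)
    have hgr := grad_ineq hhconv hy hmem (hh' y hy)
    have hdiff : (2⁻¹:ℝ) • x + (2⁻¹:ℝ) • y - y = (2⁻¹:ℝ) • (x - y) := by module
    rw [hdiff, real_inner_smul_right] at hgr
    simp only [smul_eq_mul] at hstrict
    simp only [breg]
    linarith
  -- fs Bregman nonnegativity
  have hfs_breg_nonneg : ∀ (ξ : Ξ), ∀ x ∈ C, ∀ y ∈ interior C,
      0 ≤ breg (fs ξ) (G ξ) x y := by
    intro ξ x hx y hy
    have := grad_ineq (hfsconv ξ) (interior_subset hy) hx (hfsgrad ξ y hy)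
    simp only [breg]; linarith
  -- xstar is a global minimizer of each fs ξ
  have hfs_min : ∀ (ξ : Ξ), ∀ x ∈ C, fs ξ xstar ≤ fs ξ x := by
    intro ξ x hx
    have := grad_ineq (hfsconv ξ) (interior_subset hxstar) hx (hfsgrad ξ xstar hxstar)
    simpa [hinterp ξ] using this
  have hηL : η * L ≤ 1 / 2 := by
    have h2 : η * (2 * L) ≤ 1 := (le_div_iff₀ (by positivity)).1 hη
    nlinarith
  -- pointwise one-step inequality
  have hstep : ∀ (ξ : Ξ) (x x' : E d), x ∈ interior C → x' ∈ interior C →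
      h' x' = h' x - η • G ξ x →
      breg h h' xstar x' ≤ breg h h' xstar x - η * breg (fs ξ) (G ξ) xstar x := by
    intro ξ x x' hx hx' hup
    have hLsm := hrelsmooth ξ x' hx' x hx
    have hD0 := hDh0 x' hx' x hx
    have hmin := hfs_min ξ x' (interior_subset hx')
    have e1 : (inner ℝ (h' x') (xstar - x') : ℝ)
        = inner ℝ (h' x) (xstar - x') - η * inner ℝ (G ξ x) (xstar - x') := by
      rw [hup, inner_sub_left, real_inner_smul_left]
    have esub : xstar - x' = (xstar - x) - (x' - x) := by abel
    have e2 : (inner ℝ (h' x) (xstar - x') : ℝ)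
        = inner ℝ (h' x) (xstar - x) - inner ℝ (h' x) (x' - x) := by
      rw [esub, inner_sub_right]
    have e3 : (inner ℝ (G ξ x) (xstar - x') : ℝ)
        = inner ℝ (G ξ x) (xstar - x) - inner ℝ (G ξ x) (x' - x) := by
      rw [esub, inner_sub_right]
    have k1 : η * breg (fs ξ) (G ξ) x' x ≤ η * (L * breg h h' x' x) :=
      mul_le_mul_of_nonneg_left hLsm hη0.le
    have k2 : η * (L * breg h h' x' x) ≤ (1/2) * breg h h' x' x := by
      nlinarith [mul_nonneg (show (0:ℝ) ≤ 1/2 - η * L by linarith) hD0]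
    have k3 : η * fs ξ xstar ≤ η * fs ξ x' := mul_le_mul_of_nonneg_left hmin hη0.le
    simp only [breg] at k1 k2 hD0 ⊢
    rw [e1, e2, e3]
    linarith
  -- degenerate case
  by_cases hdeg : ∀ y ∈ interior C, y = xstar
  · intro t
    have hDzero : ∀ ω, breg h h' xstar (X t ω) = 0 := by
      intro ω
      rw [hdeg _ (hXmem t ω)]
      simp [breg]
    have hx0s : x0 = xstar := hdeg x0 hx0
    have hL0 : ∫ ω, breg h h' xstar (X t ω) ∂P = 0 := by
      rw [show (fun ω => breg h h' xstar (X t ω)) = fun _ => (0:ℝ) from funext hDzero]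
      simp
    rw [hL0, hx0s]
    simp [breg]
  · push_neg at hdeg
    obtain ⟨y₀, hy₀S, hy₀ne⟩ := hdeg
    -- integrability of the gradients
    have hGint : ∀ x ∈ interior C, Integrable (fun ξ => G ξ x) ν := by
      intro x hx
      by_cases hxx : x = xstar
      · subst hxx
        simpa [hinterp] using (integrable_const (0 : E d) (μ := ν))
      · by_contra hni
        have hf'x : f' x = 0 := by rw [hf'def]; exact integral_undef hni
        have h1 := hrelsc x hx xstar hxstar
        have h2 := hrelsc xstar hxstar x hx
        have p1 := hDhpos x hx xstar hxstar hxx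
        have p2 := hDh0 xstar hxstar x hx
        simp only [breg, hcrit, hf'x, inner_zero_left] at h1 h2 p1 p2
        nlinarith
    -- a.e.-measurability of the relative values
    have hrAESM : ∀ x ∈ interior C,
        AEStronglyMeasurable (fun ξ => fs ξ x - fs ξ xstar) ν := by
      intro x hx
      set v : E d := x - xstar with hvdef
      set z : ℝ → E d := fun t => xstar + t • v with hzdef
      have hzS : ∀ t ∈ Set.Icc (0:ℝ) 1, z t ∈ interior C := by
        intro t ht
        have hmem := hconvS hxstar hx (by linarith [ht.2] : (0:ℝ) ≤ 1 - t) ht.1 (by ring)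
        have heq : (1 - t) • xstar + t • x = z t := by
          simp only [hzdef, hvdef]; module
        rwa [heq] at hmem
      have hgi : ∀ t ∈ Set.Icc (0:ℝ) 1, ∀ s ∈ Set.Icc (0:ℝ) 1, ∀ ξ,
          fs ξ (z t) + (s - t) * (inner ℝ (G ξ (z t)) v : ℝ) ≤ fs ξ (z s) := by
        intro t ht s hs ξ
        have := grad_ineq (hfsconv ξ) (interior_subset (hzS t ht))
          (interior_subset (hzS s hs)) (hfsgrad ξ _ (hzS t ht))
        have hzz : z s - z t = (s - t) • v := by simp only [hzdef]; module
        rwa [hzz, real_inner_smul_right] at this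
      set Sn : ℕ → Ξ → ℝ := fun n ξ =>
        ∑ k ∈ Finset.range n, (1 / (n:ℝ)) * (inner ℝ (G ξ (z ((k:ℝ) / n))) v : ℝ)
        with hSndef
      have hSnm : ∀ n, AEStronglyMeasurable (Sn n) ν := by
        intro n
        apply Finset.aestronglyMeasurable_fun_sum
        intro k hk
        have hkn : k < n := Finset.mem_range.1 hk
        have hn : 0 < n := lt_of_le_of_lt (Nat.zero_le k) hkn
        have hmem : (k:ℝ) / n ∈ Set.Icc (0:ℝ) 1 := by
          constructor
          · positivity
          · rw [div_le_one (by exact_mod_cast hn)]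
            exact_mod_cast hkn.le
        exact ((hGint _ (hzS _ hmem)).aestronglyMeasurable.inner
          aestronglyMeasurable_const).const_mul _
      have htendSn : ∀ ξ, Filter.Tendsto (fun n => Sn n ξ) Filter.atTop
          (nhds (fs ξ x - fs ξ xstar)) := by
        intro ξ
        have hb : ∀ n : ℕ, 1 ≤ n →
            (fs ξ x - fs ξ xstar - (1/(n:ℝ)) * (inner ℝ (G ξ x) v : ℝ) ≤ Sn n ξ
              ∧ Sn n ξ ≤ fs ξ x - fs ξ xstar) := by
          intro n hn1
          have hnR : (0:ℝ) < n := by exact_mod_cast hn1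
          set b : ℕ → ℝ := fun k => fs ξ (z ((k:ℝ)/n)) with hbdef
          set a : ℕ → ℝ := fun k => (inner ℝ (G ξ (z ((k:ℝ)/n))) v : ℝ) with hadef
          have hmem : ∀ k : ℕ, k ≤ n → (k:ℝ)/n ∈ Set.Icc (0:ℝ) 1 := by
            intro k hk
            constructor
            · positivity
            · rw [div_le_one hnR]; exact_mod_cast hk
          have hstep1 : ∀ k, k < n → (1/(n:ℝ)) * a k ≤ b (k+1) - b k := by
            intro k hk
            have hthis := hgi _ (hmem k hk.le) _ (hmem (k+1) hk) ξ
            have hq : ((k+1:ℕ):ℝ)/n - (k:ℝ)/n = 1/(n:ℝ) := by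
              push_cast; field_simp; ring
            rw [hq] at hthis
            simp only [hbdef, hadef]
            linarith
          have hstep2 : ∀ k, k < n → b (k+1) - b k ≤ (1/(n:ℝ)) * a (k+1) := by
            intro k hk
            have hthis := hgi _ (hmem (k+1) hk) _ (hmem k hk.le) ξ
            have hq : (k:ℝ)/n - ((k+1:ℕ):ℝ)/n = -(1/(n:ℝ)) := by
              push_cast; field_simp; ring
            rw [hq] at hthis
            simp only [hbdef, hadef]
            linarith
          have hbn : b n = fs ξ x := by
            have hz1 : z ((n:ℝ)/n) = x := by
              rw [div_self (ne_of_gt hnR)]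
              simp only [hzdef, hvdef]
              rw [one_smul]; abel
            simp only [hbdef, hz1]
          have hz0 : z (0:ℝ) = xstar := by
            simp only [hzdef]; rw [zero_smul, add_zero]
          have hb0 : b 0 = fs ξ xstar := by
            simp only [hbdef, Nat.cast_zero, zero_div, hz0]
          have ha0 : a 0 = 0 := by
            simp only [hadef, Nat.cast_zero, zero_div, hz0, hinterp, inner_zero_left]
          have han : a n = (inner ℝ (G ξ x) v : ℝ) := by
            have hz1 : z ((n:ℝ)/n) = x := by
              rw [div_self (ne_of_gt hnR)]
              simp only [hzdef, hvdef]
              rw [one_smul]; abel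
            simp only [hadef, hz1]
          have hsum1 : Sn n ξ ≤ b n - b 0 := by
            calc Sn n ξ = ∑ k ∈ Finset.range n, (1/(n:ℝ)) * a k := rfl
              _ ≤ ∑ k ∈ Finset.range n, (b (k+1) - b k) :=
                  Finset.sum_le_sum (fun k hk => hstep1 k (Finset.mem_range.1 hk))
              _ = b n - b 0 := Finset.sum_range_sub b n
          have hsum2 : b n - b 0 ≤ Sn n ξ + ((1/(n:ℝ)) * a n - (1/(n:ℝ)) * a 0) := by
            have htel := Finset.sum_range_sub (fun k => (1/(n:ℝ)) * a k) n
            rw [Finset.sum_sub_distrib] at htel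
            calc b n - b 0 = ∑ k ∈ Finset.range n, (b (k+1) - b k) :=
                  (Finset.sum_range_sub b n).symm
              _ ≤ ∑ k ∈ Finset.range n, (1/(n:ℝ)) * a (k+1) :=
                  Finset.sum_le_sum (fun k hk => hstep2 k (Finset.mem_range.1 hk))
              _ = Sn n ξ + ((1/(n:ℝ)) * a n - (1/(n:ℝ)) * a 0) := by
                  have : Sn n ξ = ∑ k ∈ Finset.range n, (1/(n:ℝ)) * a k := rfl
                  linarith [htel]
          rw [hbn, hb0] at hsum1 hsum2
          rw [han, ha0] at hsum2
          constructor
          · linarith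
          · linarith
        apply tendsto_of_tendsto_of_tendsto_of_le_of_le'
          (g := fun n : ℕ => fs ξ x - fs ξ xstar - (1/(n:ℝ)) * (inner ℝ (G ξ x) v : ℝ))
          (h := fun _ : ℕ => fs ξ x - fs ξ xstar)
        · have : Filter.Tendsto (fun n : ℕ => (1/(n:ℝ)) * (inner ℝ (G ξ x) v : ℝ))
              Filter.atTop (nhds 0) := by
            simpa using tendsto_one_div_atTop_nhds_zero_nat.mul_const
              ((inner ℝ (G ξ x) v : ℝ))
          simpa using tendsto_const_nhds.sub this
        · exact tendsto_const_nhds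
        · filter_upwards [Filter.eventually_ge_atTop 1] with n hn using (hb n hn).1
        · filter_upwards [Filter.eventually_ge_atTop 1] with n hn using (hb n hn).2
      exact aestronglyMeasurable_of_tendsto_ae Filter.atTop hSnm
        (Filter.Eventually.of_forall htendSn)
    have hrInt : ∀ x ∈ interior C, Integrable (fun ξ => fs ξ x - fs ξ xstar) ν := by
      intro x hx
      refine Integrable.mono' (integrable_const (L * breg h h' x xstar)) (hrAESM x hx)
        (Filter.Eventually.of_forall fun ξ => ?_)
      have h0 : 0 ≤ fs ξ x - fs ξ xstar := by
        linarith [hfs_min ξ x (interior_subset hx)]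
      have h1 : fs ξ x - fs ξ xstar ≤ L * breg h h' x xstar := by
        have := hrelsmooth ξ x hx xstar hxstar
        simp only [breg, hinterp, inner_zero_left] at this ⊢
        linarith
      rw [Real.norm_eq_abs, abs_of_nonneg h0]; exact h1
    have hfsint_star : Integrable (fun ξ => fs ξ xstar) ν := by
      by_contra hni
      have hzero : ∀ x ∈ interior C, f x = 0 := by
        intro x hx
        rw [hfdef]
        apply integral_undef
        intro hI
        apply hni
        have h3 : (fun ξ => fs ξ xstar)
            = fun ξ => fs ξ x - (fs ξ x - fs ξ xstar) := by
          funext ξ; ring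
        rw [h3]
        exact hI.sub (hrInt x hx)
      have h1 := hrelsc y₀ hy₀S xstar hxstar
      have h2 := hDhpos y₀ hy₀S xstar hxstar hy₀ne
      simp only [breg, hzero y₀ hy₀S, hzero xstar hxstar, hcrit, inner_zero_left] at h1
      simp only [breg] at h2
      nlinarith
    have hfsintx : ∀ x ∈ interior C, Integrable (fun ξ => fs ξ x) ν := by
      intro x hx
      have h3 : (fun ξ => fs ξ x)
          = fun ξ => fs ξ xstar + (fs ξ x - fs ξ xstar) := by
        funext ξ; ring
      rw [h3]
      exact hfsint_star.add (hrInt x hx)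
    -- inner ℝ integral identity
    have hinner : ∀ x ∈ interior C,
        ∫ ξ, breg (fs ξ) (G ξ) xstar x ∂ν = breg f f' xstar x := by
      intro x hx
      have hG := hGint x hx
      have hI1 := hfsintx xstar hxstar
      have hI2 := hfsintx x hx
      have hI3 : Integrable (fun ξ => (inner ℝ (G ξ x) (xstar - x) : ℝ)) ν :=
        hG.inner_const _
      simp only [breg]
      have hI12 : Integrable (fun ξ => fs ξ xstar - fs ξ x) ν := hI1.sub hI2
      rw [integral_sub hI12 hI3, integral_sub hI1 hI2, hfdef, hfdef, hf'def]
      congr 1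
      calc ∫ ξ, (inner ℝ (G ξ x) (xstar - x) : ℝ) ∂ν
          = ∫ ξ, (inner ℝ (xstar - x) (G ξ x) : ℝ) ∂ν := by
            simp_rw [real_inner_comm]
        _ = inner ℝ (xstar - x) (∫ ξ, G ξ x ∂ν) := integral_inner hG _
        _ = inner ℝ (∫ ξ, G ξ x ∂ν) (xstar - x) := real_inner_comm _ _
    -- μ ≤ L
    have hμL : μ ≤ L := by
      have hSpos : (0:ℝ) < breg h h' y₀ xstar + breg h h' xstar y₀ :=
        add_pos_of_pos_of_nonneg (hDhpos y₀ hy₀S xstar hxstar hy₀ne)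
          (hDh0 xstar hxstar y₀ hy₀S)
      have key1 := hrelsc y₀ hy₀S xstar hxstar
      have key2 := hrelsc xstar hxstar y₀ hy₀S
      have eflip : (inner ℝ (f' y₀) (xstar - y₀) : ℝ) = - inner ℝ (f' y₀) (y₀ - xstar) := by
        rw [show xstar - y₀ = -(y₀ - xstar) by abel, inner_neg_right]
      have e : breg f f' y₀ xstar + breg f f' xstar y₀ = inner ℝ (f' y₀) (y₀ - xstar) := by
        simp only [breg, hcrit, inner_zero_left]
        rw [eflip]; ring
      have e2 : (inner ℝ (f' y₀) (y₀ - xstar) : ℝ)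
          = ∫ ξ, (inner ℝ (G ξ y₀) (y₀ - xstar) : ℝ) ∂ν := by
        rw [hf'def]
        calc (inner ℝ (∫ ξ, G ξ y₀ ∂ν) (y₀ - xstar) : ℝ)
            = inner ℝ (y₀ - xstar) (∫ ξ, G ξ y₀ ∂ν) := real_inner_comm _ _
          _ = ∫ ξ, (inner ℝ (y₀ - xstar) (G ξ y₀) : ℝ) ∂ν :=
              (integral_inner (hGint y₀ hy₀S) _).symm
          _ = ∫ ξ, (inner ℝ (G ξ y₀) (y₀ - xstar) : ℝ) ∂ν := by
              simp_rw [real_inner_comm]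
      have bound : ∫ ξ, (inner ℝ (G ξ y₀) (y₀ - xstar) : ℝ) ∂ν
          ≤ L * (breg h h' y₀ xstar + breg h h' xstar y₀) := by
        have hptw : ∀ ξ, (inner ℝ (G ξ y₀) (y₀ - xstar) : ℝ)
            ≤ L * (breg h h' y₀ xstar + breg h h' xstar y₀) := by
          intro ξ
          have s1 := hrelsmooth ξ y₀ hy₀S xstar hxstar
          have s2 := hrelsmooth ξ xstar hxstar y₀ hy₀S
          have gflip : (inner ℝ (G ξ y₀) (xstar - y₀) : ℝ)
              = - inner ℝ (G ξ y₀) (y₀ - xstar) := by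
            rw [show xstar - y₀ = -(y₀ - xstar) by abel, inner_neg_right]
          simp only [breg, hinterp, inner_zero_left] at s1 s2
          rw [gflip] at s2
          simp only [breg]
          linarith
        calc ∫ ξ, (inner ℝ (G ξ y₀) (y₀ - xstar) : ℝ) ∂ν
            ≤ ∫ _ξ, L * (breg h h' y₀ xstar + breg h h' xstar y₀) ∂ν :=
              integral_mono ((hGint y₀ hy₀S).inner_const _) (integrable_const _)
                hptw
          _ = L * (breg h h' y₀ xstar + breg h h' xstar y₀) := by
              rw [integral_const]; simp
      have : μ * (breg h h' y₀ xstar + breg h h' xstar y₀)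
          ≤ L * (breg h h' y₀ xstar + breg h h' xstar y₀) := by
        calc μ * (breg h h' y₀ xstar + breg h h' xstar y₀)
            ≤ breg f f' y₀ xstar + breg f f' xstar y₀ := by linarith
          _ = inner ℝ (f' y₀) (y₀ - xstar) := e
          _ = ∫ ξ, (inner ℝ (G ξ y₀) (y₀ - xstar) : ℝ) ∂ν := e2
          _ ≤ _ := bound
      exact le_of_mul_le_mul_right (by linarith [this]) hSpos
    have hημ : η * μ ≤ 1 / 2 :=
      le_trans (mul_le_mul_of_nonneg_left hμL hη0.le) hηL
    -- per-step expected contraction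
    have hstepE : ∀ t, ∫ ω, breg h h' xstar (X (t+1) ω) ∂P
        ≤ (1 - η * μ) * ∫ ω, breg h h' xstar (X t ω) ∂P := by
      intro t
      set pair : Ω → E d × Ξ := fun ω => (X t ω, ξs t ω) with hpairdef
      have hpairm : AEMeasurable pair P := (hXmeas t).prodMk (hξmeas t)
      set m : Measure (E d) := Measure.map (X t) P with hmdef
      haveI hmprob : IsProbabilityMeasure m := Measure.isProbabilityMeasure_map (hXmeas t)
      have hprod : Measure.map pair P = m.prod ν := by
        rw [hmdef, ← hlaw t]
        exact (indepFun_iff_map_prod_eq_prod_map_map (hXmeas t) (hξmeas t)).1 (hindep t)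
      have hmSc : m (interior C)ᶜ = 0 := by
        rw [hmdef, Measure.map_apply_of_aemeasurable (hXmeas t)
          isOpen_interior.measurableSet.compl]
        have hpre : X t ⁻¹' (interior C)ᶜ = ∅ := by
          ext ω
          simp [hXmem t ω]
        rw [hpre]
        exact measure_empty
      have hmS : ∀ᵐ x ∂m, x ∈ interior C := by
        rw [ae_iff]
        have hcompl : {x : E d | ¬ x ∈ interior C} = (interior C)ᶜ := rfl
        rw [hcompl]
        exact hmSc
      have hfst_ae : ∀ᵐ q ∂(m.prod ν), q.1 ∈ interior C := by
        rw [ae_iff]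
        refine measure_mono_null (fun q hq => ?_)
          (?_ : (m.prod ν) (((interior C)ᶜ) ×ˢ (Set.univ : Set Ξ)) = 0)
        · exact ⟨hq, trivial⟩
        · rw [Measure.prod_prod, hmSc, zero_mul]
      have hsnd_ae : ∀ {pr : Ξ → Prop}, (∀ᵐ ξ ∂ν, pr ξ) → (∀ᵐ q ∂(m.prod ν), pr q.2) := by
        intro pr hp
        obtain ⟨Z, hZsub, hZm, hZ0⟩ := exists_measurable_superset_of_null (ae_iff.1 hp)
        rw [ae_iff]
        refine measure_mono_null (fun q hq => ?_)
          (?_ : (m.prod ν) ((Set.univ : Set (E d)) ×ˢ Z) = 0)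
        · exact ⟨trivial, hZsub hq⟩
        · rw [Measure.prod_prod, hZ0, mul_zero]
      -- countable dense family
      obtain ⟨u, hu⟩ : ∃ u : ℕ → E d, DenseRange u :=
        ⟨TopologicalSpace.denseSeq (E d), TopologicalSpace.denseRange_denseSeq (E d)⟩
      have hex : ∀ (n : ℕ) (x : E d), ∃ i : ℕ,
          (x ∈ interior C → u i ∈ interior C ∧ dist (u i) x < 1/((n:ℝ)+1)) := by
        intro n x
        by_cases hxS : x ∈ interior C
        · have hne : (Metric.ball x (1/((n:ℝ)+1)) ∩ interior C).Nonempty :=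
            ⟨x, Metric.mem_ball_self (by positivity), hxS⟩
          obtain ⟨i, hi⟩ := hu.exists_mem_open (Metric.isOpen_ball.inter isOpen_interior) hne
          exact ⟨i, fun _ => ⟨hi.2, by simpa [dist_comm] using hi.1⟩⟩
        · exact ⟨0, fun hh => absurd hh hxS⟩
      have hmsets : ∀ (n i : ℕ), MeasurableSet {x : E d |
          x ∈ interior C → u i ∈ interior C ∧ dist (u i) x < 1/((n:ℝ)+1)} := by
        intro n i
        have hset : {x : E d |
            x ∈ interior C → u i ∈ interior C ∧ dist (u i) x < 1/((n:ℝ)+1)}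
            = (interior C)ᶜ ∪ {x | u i ∈ interior C ∧ dist (u i) x < 1/((n:ℝ)+1)} := by
          ext w
          by_cases hw : w ∈ interior C <;> simp [hw]
        rw [hset]
        refine (isOpen_interior.measurableSet.compl).union ?_
        by_cases hui : u i ∈ interior C
        · have hball : {x : E d | u i ∈ interior C ∧ dist (u i) x < 1/((n:ℝ)+1)}
              = Metric.ball (u i) (1/((n:ℝ)+1)) := by
            ext w
            simp [hui, Metric.mem_ball, dist_comm]
          rw [hball]
          exact Metric.isOpen_ball.measurableSet
        · have hemp : {x : E d | u i ∈ interior C ∧ dist (u i) x < 1/((n:ℝ)+1)}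
              = (∅ : Set (E d)) := by
            ext w
            simp [hui]
          rw [hemp]
          exact MeasurableSet.empty
      have hfindm : ∀ n, Measurable fun x : E d => Nat.find (hex n x) :=
        fun n => measurable_find (hex n) (fun i => hmsets n i)
      -- measurable versions of the relative values at the countable family
      have hver : ∀ i : ℕ, ∃ g : Ξ → ℝ, Measurable g ∧
          ∀ᵐ ξ ∂ν, (u i ∈ interior C → g ξ = fs ξ (u i) - fs ξ xstar) := by
        intro i
        by_cases hui : u i ∈ interior C
        · have hh := hrAESM (u i) hui
          exact ⟨hh.mk _, hh.stronglyMeasurable_mk.measurable,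
            hh.ae_eq_mk.mono fun ξ hξ _ => hξ.symm⟩
        · exact ⟨fun _ => 0, measurable_const,
            Filter.Eventually.of_forall fun ξ hh => absurd hh hui⟩
      choose gv hgvm hgv using hver
      have hN : ∀ᵐ ξ ∂ν, ∀ i, (u i ∈ interior C → gv i ξ = fs ξ (u i) - fs ξ xstar) :=
        ae_all_iff.2 hgv
      have hFm : Measurable (fun q : Ξ × ℕ => gv q.2 q.1) :=
        measurable_from_prod_countable_left (fun i => hgvm i)
      have hRapm : ∀ n, Measurable (fun p : E d × Ξ => gv (Nat.find (hex n p.1)) p.2) := by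
        intro n
        exact hFm.comp (measurable_snd.prodMk ((hfindm n).comp measurable_fst))
      set Rt : E d × Ξ → ℝ := fun p => fs p.2 p.1 - fs p.2 xstar with hRtdef
      have hgood : ∀ᵐ q ∂(m.prod ν), q.1 ∈ interior C ∧
          ∀ i, (u i ∈ interior C → gv i q.2 = fs q.2 (u i) - fs q.2 xstar) :=
        hfst_ae.and (hsnd_ae hN)
      -- key sequential convergence
      have hkey : ∀ (ξ : Ξ) (y : E d), y ∈ interior C →
          (∀ i, u i ∈ interior C → gv i ξ = fs ξ (u i) - fs ξ xstar) →
          Filter.Tendsto (fun n => gv (Nat.find (hex n y)) ξ) Filter.atTop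
            (nhds (fs ξ y - fs ξ xstar)) := by
        intro ξ y hy hgvξ
        set w : ℕ → E d := fun n => u (Nat.find (hex n y)) with hwdef
        have hw : ∀ n, w n ∈ interior C ∧ dist (w n) y < 1/((n:ℝ)+1) :=
          fun n => Nat.find_spec (hex n y) hy
        have hwy : Filter.Tendsto w Filter.atTop (nhds y) := by
          rw [tendsto_iff_dist_tendsto_zero]
          exact squeeze_zero (fun n => dist_nonneg) (fun n => (hw n).2.le)
            tendsto_one_div_add_atTop_nhds_zero_nat
        have hlowb : ∀ n, fs ξ y + (inner ℝ (G ξ y) (w n - y) : ℝ) ≤ fs ξ (w n) :=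
          fun n => grad_ineq (hfsconv ξ) (interior_subset hy)
            (interior_subset (hw n).1) (hfsgrad ξ y hy)
        have hupb : ∀ n, fs ξ (w n) ≤ fs ξ y + (inner ℝ (G ξ y) (w n - y) : ℝ)
            + L * breg h h' (w n) y := by
          intro n
          have hsm := hrelsmooth ξ (w n) (hw n).1 y hy
          simp only [breg] at hsm ⊢
          linarith
        have hinner0 : Filter.Tendsto (fun n => (inner ℝ (G ξ y) (w n - y) : ℝ))
            Filter.atTop (nhds 0) := by
          have hsub : Filter.Tendsto (fun n => w n - y) Filter.atTop (nhds 0) := by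
            simpa [sub_self] using hwy.sub (tendsto_const_nhds (x := y))
          simpa using Filter.Tendsto.inner (tendsto_const_nhds (x := G ξ y)) hsub
        have hbregto : Filter.Tendsto (fun n => breg h h' (w n) y) Filter.atTop (nhds 0) := by
          have hhy : ContinuousAt h y :=
            hh2.continuousOn.continuousAt (isOpen_interior.mem_nhds hy)
          have h1 : Filter.Tendsto (fun n => h (w n)) Filter.atTop (nhds (h y)) :=
            hhy.tendsto.comp hwy
          have h2 : Filter.Tendsto (fun n => (inner ℝ (h' y) (w n - y) : ℝ))
              Filter.atTop (nhds 0) := by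
            have hsub : Filter.Tendsto (fun n => w n - y) Filter.atTop (nhds 0) := by
              simpa [sub_self] using hwy.sub (tendsto_const_nhds (x := y))
            simpa using Filter.Tendsto.inner (tendsto_const_nhds (x := h' y)) hsub
          have := (h1.sub (tendsto_const_nhds (x := h y))).sub h2
          simpa [breg] using this
        have hfsw : Filter.Tendsto (fun n => fs ξ (w n)) Filter.atTop (nhds (fs ξ y)) := by
          apply tendsto_of_tendsto_of_tendsto_of_le_of_le'
            (g := fun n => fs ξ y + (inner ℝ (G ξ y) (w n - y) : ℝ))
            (h := fun n => fs ξ y + (inner ℝ (G ξ y) (w n - y) : ℝ) + L * breg h h' (w n) y)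
          · simpa using tendsto_const_nhds.add hinner0
          · have := (tendsto_const_nhds (x := fs ξ y)).add hinner0
            simpa using this.add (hbregto.const_mul L)
          · exact Filter.Eventually.of_forall hlowb
          · exact Filter.Eventually.of_forall hupb
        have heqfun : (fun n => gv (Nat.find (hex n y)) ξ)
            = fun n => fs ξ (w n) - fs ξ xstar := by
          funext n
          exact hgvξ _ (hw n).1
        rw [heqfun]
        simpa using hfsw.sub tendsto_const_nhds
      have hRtm : AEStronglyMeasurable Rt (m.prod ν) := by
        apply aestronglyMeasurable_of_tendsto_ae Filter.atTop
          (fun n => (hRapm n).aestronglyMeasurable)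
        filter_upwards [hgood] with q hq
        exact hkey q.2 q.1 hq.1 hq.2
      -- shifted versions
      set wm : ℕ → E d → E d := fun k y => y + (1/((k:ℝ)+1)) • (xstar - y) with hwmdef
      have hwmS : ∀ k, ∀ y ∈ interior C, wm k y ∈ interior C := by
        intro k y hy
        have hk1 : (0:ℝ) < 1/((k:ℝ)+1) := by positivity
        have hk2 : 1/((k:ℝ)+1) ≤ 1 := by
          rw [div_le_one (by positivity)]
          have : (0:ℝ) ≤ (k:ℝ) := Nat.cast_nonneg k
          linarith
        have hmem := hconvS hy hxstar (show (0:ℝ) ≤ 1 - 1/((k:ℝ)+1) by linarith) hk1.le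
          (by ring)
        have heq : (1 - 1/((k:ℝ)+1)) • y + (1/((k:ℝ)+1)) • xstar = wm k y := by
          simp only [hwmdef]; module
        rwa [heq] at hmem
      have hwmmeas : ∀ k, Measurable (wm k) := by
        intro k
        exact (continuous_id.add ((continuous_const.sub continuous_id).const_smul
          (1/((k:ℝ)+1)))).measurable
      have hRshift : ∀ k, AEStronglyMeasurable (fun p : E d × Ξ => Rt (wm k p.1, p.2))
          (m.prod ν) := by
        intro k
        apply aestronglyMeasurable_of_tendsto_ae Filter.atTop
          (f := fun (n : ℕ) (p : E d × Ξ) => gv (Nat.find (hex n (wm k p.1))) p.2)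
          (fun n => ((hRapm n).comp
            (((hwmmeas k).comp measurable_fst).prodMk measurable_snd)).aestronglyMeasurable)
        filter_upwards [hgood] with q hq
        exact hkey q.2 (wm k q.1) (hwmS k q.1 hq.1) hq.2
      set Gt : E d × Ξ → ℝ := fun p => (inner ℝ (G p.2 p.1) (xstar - p.1) : ℝ) with hGtdef
      have hGtm : AEStronglyMeasurable Gt (m.prod ν) := by
        apply aestronglyMeasurable_of_tendsto_ae Filter.atTop
          (f := fun (k : ℕ) (p : E d × Ξ) => ((k:ℝ)+1) * (Rt (wm k p.1, p.2) - Rt p))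
          (fun k => ((hRshift k).sub hRtm).const_mul _)
        filter_upwards [hfst_ae] with q hq
        have hd := hasDerivAt_comp_line (xstar - q.1) (hfsgrad q.2 q.1 hq)
        rw [hasDerivAt_iff_tendsto_slope] at hd
        have hseq : Filter.Tendsto (fun k : ℕ => 1/((k:ℝ)+1)) Filter.atTop
            (nhdsWithin 0 {(0:ℝ)}ᶜ) := by
          apply tendsto_nhdsWithin_of_tendsto_nhds_of_eventually_within
          · exact tendsto_one_div_add_atTop_nhds_zero_nat
          · exact Filter.Eventually.of_forall (fun k => by
              simp only [Set.mem_compl_iff, Set.mem_singleton_iff]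
              positivity)
        have hcomp := hd.comp hseq
        refine hcomp.congr (fun k => ?_)
        show slope (fun s : ℝ => fs q.2 (q.1 + s • (xstar - q.1))) 0 (1/((k:ℝ)+1))
            = ((k:ℝ)+1) * (Rt (wm k q.1, q.2) - Rt q)
        simp only [slope, vsub_eq_sub, sub_zero, zero_smul, add_zero, smul_eq_mul,
          hRtdef, hwmdef, one_div, inv_inv]
        ring
      have hphim : AEStronglyMeasurable
          (fun p : E d × Ξ => breg (fs p.2) (G p.2) xstar p.1) (m.prod ν) := by
        have heq : (fun p : E d × Ξ => breg (fs p.2) (G p.2) xstar p.1)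
            = fun p => -Rt p - Gt p := by
          funext p
          simp only [breg, hRtdef, hGtdef]
          ring
        rw [heq]
        exact hRtm.neg.sub hGtm
      -- pointwise bounds along the process
      have hφnn : ∀ ω, 0 ≤ breg (fs (ξs t ω)) (G (ξs t ω)) xstar (X t ω) :=
        fun ω => hfs_breg_nonneg (ξs t ω) xstar (interior_subset hxstar)
          (X t ω) (hXmem t ω)
      have hφbound : ∀ ω, η * breg (fs (ξs t ω)) (G (ξs t ω)) xstar (X t ω)
          ≤ breg h h' xstar (X t ω) - breg h h' xstar (X (t+1) ω) := by
        intro ω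
        have := hstep (ξs t ω) (X t ω) (X (t+1) ω) (hXmem t ω) (hXmem (t+1) ω)
          (hupdate t ω)
        linarith
      have hφcompm : AEStronglyMeasurable
          (fun ω => breg (fs (ξs t ω)) (G (ξs t ω)) xstar (X t ω)) P := by
        have h1 : AEStronglyMeasurable
            (fun p : E d × Ξ => breg (fs p.2) (G p.2) xstar p.1)
            (Measure.map pair P) := by
          rw [hprod]; exact hphim
        have h2 := h1.comp_aemeasurable hpairm
        simpa [Function.comp_def, hpairdef] using h2
      have hsubint : Integrable (fun ω => breg h h' xstar (X t ω)
          - breg h h' xstar (X (t+1) ω)) P := (hint t).sub (hint (t+1))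
      have hφint : Integrable
          (fun ω => breg (fs (ξs t ω)) (G (ξs t ω)) xstar (X t ω)) P := by
        refine Integrable.mono' (hsubint.const_mul (1/η)) hφcompm
          (Filter.Eventually.of_forall fun ω => ?_)
        rw [Real.norm_eq_abs, abs_of_nonneg (hφnn ω)]
        have hb := hφbound ω
        rw [show breg (fs (ξs t ω)) (G (ξs t ω)) xstar (X t ω)
            = (1/η) * (η * breg (fs (ξs t ω)) (G (ξs t ω)) xstar (X t ω)) by
          field_simp]
        exact mul_le_mul_of_nonneg_left hb (by positivity)
      have hφintP : Integrable (fun p : E d × Ξ => breg (fs p.2) (G p.2) xstar p.1)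
          (m.prod ν) := by
        rw [← hprod]
        refine (integrable_map_measure ?_ hpairm).2 ?_
        · rw [hprod]; exact hphim
        · simpa [Function.comp_def, hpairdef] using hφint
      have hIeq : ∫ ω, breg (fs (ξs t ω)) (G (ξs t ω)) xstar (X t ω) ∂P
          = ∫ p, breg (fs p.2) (G p.2) xstar p.1 ∂(m.prod ν) := by
        rw [← hprod, integral_map hpairm (by rw [hprod]; exact hphim)]
      -- integrability of the h-Bregman divergence on m
      have hh'cont : ContinuousOn h' (interior C) := by
        have h1 : ContinuousOn (fderiv ℝ h) (interior C) :=
          hh2.continuousOn_fderiv_of_isOpen isOpen_interior (by norm_num)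
        have h2 : ∀ x ∈ interior C,
            h' x = (InnerProductSpace.toDual ℝ (E d)).symm (fderiv ℝ h x) := by
          intro x hx
          rw [(hh' x hx).hasFDerivAt.fderiv]
          simp
        exact ContinuousOn.congr
          ((InnerProductSpace.toDual ℝ (E d)).symm.continuous.comp_continuousOn h1) h2
      have hbScont : ContinuousOn (fun y => breg h h' xstar y) (interior C) := by
        simp only [breg]
        exact (continuousOn_const.sub hh2.continuousOn).sub
          (hh'cont.inner (continuous_const.sub continuous_id).continuousOn)
      have hbS : AEStronglyMeasurable (fun y => breg h h' xstar y) m := by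
        have := hbScont.aestronglyMeasurable (μ := m) isOpen_interior.measurableSet
        rwa [Measure.restrict_eq_self_of_ae_mem hmS] at this
      have hbint : Integrable (fun y => breg h h' xstar y) m := by
        rw [hmdef]
        refine (integrable_map_measure ?_ (hXmeas t)).2 ?_
        · rw [← hmdef]; exact hbS
        · simpa [Function.comp_def] using hint t
      have hmb : ∫ y, breg h h' xstar y ∂m = ∫ ω, breg h h' xstar (X t ω) ∂P := by
        rw [hmdef, integral_map (hXmeas t) (by rw [← hmdef]; exact hbS)]
      have hfub : ∫ p, breg (fs p.2) (G p.2) xstar p.1 ∂(m.prod ν)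
          = ∫ y, (∫ ξ, breg (fs ξ) (G ξ) xstar y ∂ν) ∂m := by
        rw [integral_prod _ hφintP]
      have hlow2 : ∀ᵐ y ∂m, μ * breg h h' xstar y
          ≤ ∫ ξ, breg (fs ξ) (G ξ) xstar y ∂ν := by
        filter_upwards [hmS] with y hy
        rw [hinner y hy]
        exact hrelsc xstar hxstar y hy
      have hIntInner : Integrable (fun y => ∫ ξ, breg (fs ξ) (G ξ) xstar y ∂ν) m :=
        hφintP.integral_prod_left
      have hmain : μ * ∫ y, breg h h' xstar y ∂m
          ≤ ∫ p, breg (fs p.2) (G p.2) xstar p.1 ∂(m.prod ν) := by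
        rw [hfub, ← integral_const_mul]
        exact integral_mono_ae (hbint.const_mul μ) hIntInner hlow2
      have hsub2 : Integrable (fun ω => breg h h' xstar (X t ω)
          - η * breg (fs (ξs t ω)) (G (ξs t ω)) xstar (X t ω)) P :=
        (hint t).sub (hφint.const_mul η)
      calc ∫ ω, breg h h' xstar (X (t+1) ω) ∂P
          ≤ ∫ ω, (breg h h' xstar (X t ω)
              - η * breg (fs (ξs t ω)) (G (ξs t ω)) xstar (X t ω)) ∂P :=
            integral_mono (hint (t+1)) hsub2 (fun ω => by linarith [hφbound ω])
        _ = ∫ ω, breg h h' xstar (X t ω) ∂P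
            - η * ∫ ω, breg (fs (ξs t ω)) (G (ξs t ω)) xstar (X t ω) ∂P := by
            rw [integral_sub (hint t) (hφint.const_mul η), integral_const_mul]
        _ ≤ ∫ ω, breg h h' xstar (X t ω) ∂P
            - η * (μ * ∫ ω, breg h h' xstar (X t ω) ∂P) := by
            have hge : μ * ∫ ω, breg h h' xstar (X t ω) ∂P
                ≤ ∫ ω, breg (fs (ξs t ω)) (G (ξs t ω)) xstar (X t ω) ∂P := by
              rw [hIeq, ← hmb]
              exact hmain
            have := mul_le_mul_of_nonneg_left hge hη0.le
            linarith
        _ = (1 - η * μ) * ∫ ω, breg h h' xstar (X t ω) ∂P := by ring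
    intro t
    induction t with
    | zero =>
      simp only [hX0, pow_zero, one_mul]
      rw [integral_const]
      simp
    | succ t ih =>
      calc ∫ ω, breg h h' xstar (X (t+1) ω) ∂P
          ≤ (1 - η * μ) * ∫ ω, breg h h' xstar (X t ω) ∂P := hstepE t
        _ ≤ (1 - η * μ) * ((1 - η * μ) ^ t * breg h h' xstar x0) :=
            mul_le_mul_of_nonneg_left ih (by linarith)
        _ = (1 - η * μ) ^ (t+1) * breg h h' xstar x0 := by ring
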